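/- Let σ > 0, q ∈ (1,2), and let f : [0, qπ/2] → ℝ be continuously differentiable, nonnegative, with f(0) = 0 and f' ≥ 0 on [0, qπ/2]. Then ∫₀^{π/2} (f(qx) − f(x/q)) f'(x) / x^σ dx ≥ C̃_{q,σ} ∫₀^{π/2} f(x)² / x^{1+σ} dx for a constant C̃_{q,σ} > 0 depending only on q and σ (interpreted as: if the right side is infinite, so is the left). -/

import Mathlib

open Real MeasureTheory Set intervalIntegral Filter
open scoped ENNReal Topology

lemma aux_hasDerivAt {b : ℝ} {f : ℝ → ℝ} (hf : ContDiffOn ℝ 1 f (Icc 0 b))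
    {x : ℝ} (hx : x ∈ Ioo (0:ℝ) b) :
    HasDerivAt f (derivWithin f (Icc 0 b) x) x := by
  have hmem : Icc (0:ℝ) b ∈ nhds x := Icc_mem_nhds hx.1 hx.2
  have hd := (hf.differentiableOn one_ne_zero) x (Ioo_subset_Icc_self hx)
  have hda : DifferentiableAt ℝ f x := hd.differentiableAt hmem
  rw [derivWithin_of_mem_nhds hmem]
  exact hda.hasDerivAt

lemma aux_mono {b : ℝ} (hb : 0 < b) {f : ℝ → ℝ} (hf : ContDiffOn ℝ 1 f (Icc 0 b))
    (hder : ∀ x ∈ Icc (0:ℝ) b, 0 ≤ derivWithin f (Icc 0 b) x) :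
    MonotoneOn f (Icc 0 b) := by
  apply monotoneOn_of_deriv_nonneg (convex_Icc _ _) hf.continuousOn
  · rw [interior_Icc]
    exact fun x hx => (aux_hasDerivAt hf hx).differentiableAt.differentiableWithinAt
  · rw [interior_Icc]
    intro x hx
    rw [(aux_hasDerivAt hf hx).deriv]
    exact hder x (Ioo_subset_Icc_self hx)

lemma aux_cont_deriv {b : ℝ} (hb : 0 < b) {f : ℝ → ℝ} (hf : ContDiffOn ℝ 1 f (Icc 0 b)) :
    ContinuousOn (derivWithin f (Icc 0 b)) (Icc 0 b) :=
  hf.continuousOn_derivWithin (uniqueDiffOn_Icc hb) le_rfl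

lemma aux_scale {F : ℝ → ℝ≥0∞} (hF : Measurable F) {c : ℝ} (hc : 0 < c) (m : ℝ) :
    ∫⁻ x in Ioc 0 m, F (x / c) = ENNReal.ofReal c * ∫⁻ u in Ioc 0 (m / c), F u := by
  have hmeas : Measurable fun x : ℝ => c * x := measurable_const.mul measurable_id
  have hpre : (fun x : ℝ => c * x) ⁻¹' (Ioc 0 m) = Ioc 0 (m / c) := by
    ext x
    simp only [mem_preimage, mem_Ioc]
    constructor
    · rintro ⟨h1, h2⟩
      refine ⟨?_, (le_div_iff₀ hc).mpr (by linarith [mul_comm c x])⟩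
      by_contra h
      push_neg at h
      nlinarith
    · rintro ⟨h1, h2⟩
      rw [le_div_iff₀ hc] at h2
      exact ⟨mul_pos hc h1, by nlinarith⟩
  have hvol : volume = ENNReal.ofReal c • Measure.map (fun x : ℝ => c * x) volume := by
    rw [Real.map_volume_mul_left hc.ne', smul_smul, ← ENNReal.ofReal_mul hc.le,
      abs_of_pos (inv_pos.mpr hc), mul_inv_cancel₀ hc.ne', ENNReal.ofReal_one, one_smul]
  calc ∫⁻ x in Ioc 0 m, F (x / c)
      = ∫⁻ x, F (x / c) ∂((ENNReal.ofReal c • Measure.map (fun x : ℝ => c * x) volume).restrict (Ioc 0 m)) := by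
        rw [← hvol]
    _ = ENNReal.ofReal c * ∫⁻ x, F (x / c) ∂((Measure.map (fun x : ℝ => c * x) volume).restrict (Ioc 0 m)) := by
        rw [Measure.restrict_smul, lintegral_smul_measure, smul_eq_mul]
    _ = ENNReal.ofReal c * ∫⁻ x, F (x / c) ∂(Measure.map (fun x : ℝ => c * x) (volume.restrict (Ioc 0 (m / c)))) := by
        rw [Measure.restrict_map hmeas measurableSet_Ioc, hpre]
    _ = ENNReal.ofReal c * ∫⁻ u in Ioc 0 (m / c), F (c * u / c) := by
        rw [lintegral_map (f := fun x => F (x / c)) (hF.comp (measurable_id.div_const c)) hmeas]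
    _ = ENNReal.ofReal c * ∫⁻ u in Ioc 0 (m / c), F u := by
        congr 1
        refine lintegral_congr fun u => ?_
        rw [mul_comm, mul_div_assoc, div_self hc.ne', mul_one]

lemma core_ineq (σ q : ℝ) (hσ : 0 < σ) (hq : 1 < q) (f : ℝ → ℝ)
    (hf : ContDiffOn ℝ 1 f (Icc 0 (q * π / 2)))
    (hder : ∀ x ∈ Icc (0:ℝ) (q * π / 2), 0 ≤ derivWithin f (Icc 0 (q * π / 2)) x)
    {ε : ℝ} (hε : 0 < ε) (hεle : ε ≤ π / 2) :
    σ / 2 * ∫ x in ε..(π/2), (f x - f (x/q))^2 / x^(1+σ)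
      ≤ ∫ x in (ε/q)..(π/2), (f (q*x) - f (x/q)) * derivWithin f (Icc 0 (q * π / 2)) x / x^σ := by
  have hq0 : (0:ℝ) < q := lt_trans one_pos hq
  have hπ : (0:ℝ) < π / 2 := pi_div_two_pos
  set b : ℝ := q * π / 2 with hbdef
  have hπb : π / 2 < b := by rw [hbdef]; nlinarith
  have hb : 0 < b := lt_trans hπ hπb
  set f' : ℝ → ℝ := derivWithin f (Icc 0 b) with hf'def
  set g : ℝ → ℝ := fun x => f x - f (x/q) with hgdef
  set g' : ℝ → ℝ := fun x => f' x - f' (x/q) / q with hg'def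
  set W : ℝ → ℝ := fun x => (f (q*x) - f (x/q)) * f' x / x^σ with hWdef
  have hmono : MonotoneOn f (Icc 0 b) := aux_mono hb hf hder
  have hf'c : ContinuousOn f' (Icc 0 b) := aux_cont_deriv hb hf
  have hfc : ContinuousOn f (Icc 0 b) := hf.continuousOn
  -- membership facts
  have hmem : ∀ x ∈ Ioc (0:ℝ) (π/2), x ∈ Icc (0:ℝ) b :=
    fun x hx => ⟨hx.1.le, le_trans hx.2 hπb.le⟩
  have hmemIoo : ∀ x ∈ Ioc (0:ℝ) (π/2), x ∈ Ioo (0:ℝ) b :=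
    fun x hx => ⟨hx.1, lt_of_le_of_lt hx.2 hπb⟩
  have hmemq : ∀ x ∈ Ioc (0:ℝ) (π/2), q * x ∈ Icc (0:ℝ) b := by
    intro x hx
    constructor
    · exact le_of_lt (mul_pos hq0 hx.1)
    · rw [hbdef]; nlinarith [hx.2]
  have hmemdiv : ∀ x ∈ Ioc (0:ℝ) (π/2), x / q ∈ Ioc (0:ℝ) (π/2) := by
    intro x hx
    exact ⟨div_pos hx.1 hq0, le_trans (div_le_self hx.1.le hq.le) hx.2⟩
  have hDA : ∀ x ∈ Ioc (0:ℝ) (π/2), HasDerivAt f (f' x) x :=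
    fun x hx => aux_hasDerivAt hf (hmemIoo x hx)
  have hεq : 0 < ε / q := div_pos hε hq0
  have hεqε : ε / q ≤ ε := div_le_self hε.le hq.le
  -- continuity of components on D
  set D : Set ℝ := Ioc (0:ℝ) (π/2) with hDdef
  have hc1 : ContinuousOn (fun x => f (q*x)) D := by
    apply hfc.comp ((continuous_const.mul continuous_id).continuousOn)
    intro x hx; exact hmemq x hx
  have hc2 : ContinuousOn (fun x => f (x/q)) D := by
    apply hfc.comp ((continuous_id.div_const q).continuousOn)
    intro x hx; exact hmem _ (hmemdiv x hx)
  have hc3 : ContinuousOn f D := hfc.mono hmem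
  have hc4 : ContinuousOn f' D := hf'c.mono hmem
  have hc5 : ContinuousOn (fun x => f' (x/q)) D := by
    apply hf'c.comp ((continuous_id.div_const q).continuousOn)
    intro x hx; exact hmem _ (hmemdiv x hx)
  have hrpow : Continuous (fun x : ℝ => x ^ σ) := continuous_rpow_const hσ.le
  have hrpow1 : Continuous (fun x : ℝ => x ^ (1+σ)) := continuous_rpow_const (by linarith)
  have hpowne : ∀ x ∈ D, x ^ σ ≠ 0 := fun x hx => (rpow_pos_of_pos hx.1 σ).ne'
  have hpow1ne : ∀ x ∈ D, x ^ (1+σ) ≠ 0 := fun x hx => (rpow_pos_of_pos hx.1 (1+σ)).ne'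
  have hWc : ContinuousOn W D :=
    ((hc1.sub hc2).mul hc4).div hrpow.continuousOn hpowne
  have hgc : ContinuousOn g D := hc3.sub hc2
  have hg'c : ContinuousOn g' D := hc4.sub ((hc5.div_const q))
  have hG2c : ContinuousOn (fun x => g x ^ 2 / x^(1+σ)) D :=
    (hgc.pow 2).div hrpow1.continuousOn hpow1ne
  have hGG'c : ContinuousOn (fun x => g x * g' x / x^σ) D :=
    (hgc.mul hg'c).div hrpow.continuousOn hpowne
  -- subsets
  have hsub1 : uIcc (ε/q) ε ⊆ D := by
    rw [uIcc_of_le hεqε]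
    exact fun x hx => ⟨lt_of_lt_of_le hεq hx.1, le_trans hx.2 hεle⟩
  have hsub2 : uIcc ε (π/2) ⊆ D := by
    rw [uIcc_of_le hεle]
    exact fun x hx => ⟨lt_of_lt_of_le hε hx.1, hx.2⟩
  -- interval integrability
  have hWint1 : IntervalIntegrable W volume (ε/q) ε := (hWc.mono hsub1).intervalIntegrable
  have hWint2 : IntervalIntegrable W volume ε (π/2) := (hWc.mono hsub2).intervalIntegrable
  have hG2int : IntervalIntegrable (fun x => g x ^ 2 / x^(1+σ)) volume ε (π/2) :=
    (hG2c.mono hsub2).intervalIntegrable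
  have hGG'int : IntervalIntegrable (fun x => g x * g' x / x^σ) volume ε (π/2) :=
    (hGG'c.mono hsub2).intervalIntegrable
  -- FTC on [ε/q, ε] for f
  have hFTC1 : ∫ x in (ε/q)..ε, f' x = f ε - f (ε/q) := by
    apply integral_eq_sub_of_hasDerivAt
    · intro x hx
      exact hDA x (hsub1 hx)
    · exact ((hc4.mono hsub1)).intervalIntegrable
  have hεD : ε ∈ D := ⟨hε, hεle⟩
  have hgε0 : 0 ≤ g ε := by
    have := hmono (hmem _ (hmemdiv ε hεD)) (hmem ε hεD) hεqε
    simp only [hgdef]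
    linarith
  -- lower window bound
  have claim1 : g ε ^ 2 / ε ^ σ ≤ ∫ x in (ε/q)..ε, W x := by
    have hint0 : IntervalIntegrable (fun x => g ε / ε^σ * f' x) volume (ε/q) ε :=
      (continuousOn_const.mul (hc4.mono hsub1)).intervalIntegrable
    have hpt : ∀ x ∈ Icc (ε/q) ε, g ε / ε^σ * f' x ≤ W x := by
      intro x hx
      have hxD : x ∈ D := hsub1 (by rwa [uIcc_of_le hεqε])
      have hf'x : 0 ≤ f' x := hder x (hmem x hxD)
      have h2 : g ε ≤ f (q*x) - f (x/q) := by
        have h21 : f ε ≤ f (q*x) := by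
          apply hmono (hmem ε hεD) (hmemq x hxD)
          calc ε = q * (ε/q) := by field_simp
          _ ≤ q * x := by nlinarith [hx.1]
        have h22 : f (x/q) ≤ f (ε/q) := by
          apply hmono (hmem _ (hmemdiv x hxD)) (hmem _ (hmemdiv ε hεD))
          exact div_le_div_of_nonneg_right hx.2 hq0.le
        simp only [hgdef]
        linarith
      have h3 : x ^ σ ≤ ε ^ σ := rpow_le_rpow hxD.1.le hx.2 hσ.le
      have h4 : g ε / ε^σ ≤ (f (q*x) - f (x/q)) / x^σ :=
        div_le_div₀ (le_trans hgε0 h2) h2 (rpow_pos_of_pos hxD.1 σ) h3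
      calc g ε / ε^σ * f' x ≤ (f (q*x) - f (x/q)) / x^σ * f' x :=
            mul_le_mul_of_nonneg_right h4 hf'x
        _ = W x := by rw [hWdef]; ring
    have := integral_mono_on hεqε hint0 hWint1 hpt
    calc g ε ^ 2 / ε ^ σ = g ε / ε^σ * (f ε - f (ε/q)) := by
          simp only [hgdef]; ring
      _ = ∫ x in (ε/q)..ε, g ε / ε^σ * f' x := by
          rw [intervalIntegral.integral_const_mul, hFTC1]
      _ ≤ ∫ x in (ε/q)..ε, W x := this
  -- derivative facts for g on [ε, π/2]
  have hgd : ∀ x ∈ D, HasDerivAt g (g' x) x := by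
    intro x hx
    have h1 : HasDerivAt f (f' x) x := hDA x hx
    have h2 : HasDerivAt (fun y : ℝ => f (y/q)) (f' (x/q) * (1/q)) x := by
      have hdiv : HasDerivAt (fun y : ℝ => y / q) (1/q) x := (hasDerivAt_id x).div_const q
      exact (hDA _ (hmemdiv x hx)).comp x hdiv
    have := h1.sub h2
    simp only [hgdef, hg'def]
    refine this.congr_deriv ?_
    ring
  -- IBP via FTC on F = g^2 / (2 x^σ)
  have hFd : ∀ x ∈ uIcc ε (π/2), HasDerivAt (fun y => g y^2/(2*y^σ))
      (g x * g' x / x^σ - σ/2 * (g x^2/x^(1+σ))) x := by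
    intro x hx
    have hxD : x ∈ D := hsub2 hx
    have hx0 : 0 < x := hxD.1
    have hN : HasDerivAt (fun y => g y ^ 2) (2 * g x ^ 1 * g' x) x := (hgd x hxD).pow 2
    have hD : HasDerivAt (fun y : ℝ => 2 * y ^ σ) (2 * (σ * x ^ (σ - 1))) x :=
      (Real.hasDerivAt_rpow_const (Or.inl hx0.ne')).const_mul 2
    have hDiv := hN.div hD (by positivity)
    refine hDiv.congr_deriv ?_
    rw [Real.rpow_sub hx0, Real.rpow_one, Real.rpow_add hx0, Real.rpow_one]
    have hA : (0:ℝ) < x ^ σ := rpow_pos_of_pos hx0 σ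
    field_simp
  have hFTC2 : ∫ x in ε..(π/2), (g x * g' x / x^σ - σ/2 * (g x^2/x^(1+σ)))
      = g (π/2)^2/(2*(π/2)^σ) - g ε^2/(2*ε^σ) := by
    apply integral_eq_sub_of_hasDerivAt hFd
    apply IntervalIntegrable.sub hGG'int
    exact (continuousOn_const.mul (hG2c.mono hsub2)).intervalIntegrable
  have hsplit : ∫ x in ε..(π/2), (g x * g' x / x^σ - σ/2 * (g x^2/x^(1+σ)))
      = (∫ x in ε..(π/2), g x * g' x / x^σ) - σ/2 * ∫ x in ε..(π/2), g x^2/x^(1+σ) := by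
    rw [integral_sub (g := fun x => σ/2 * (g x^2/x^(1+σ))) hGG'int ((continuousOn_const.mul (hG2c.mono hsub2)).intervalIntegrable),
      intervalIntegral.integral_const_mul]
  -- compare g g' with W on [ε, π/2]
  have hcomp : (∫ x in ε..(π/2), g x * g' x / x^σ) ≤ ∫ x in ε..(π/2), W x := by
    apply integral_mono_on hεle hGG'int hWint2
    intro x hx
    have hxD : x ∈ D := hsub2 (by rwa [uIcc_of_le hεle])
    have hx0 : 0 < x := hxD.1
    have hf'x : 0 ≤ f' x := hder x (hmem x hxD)
    have hgx0 : 0 ≤ g x := by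
      have := hmono (hmem _ (hmemdiv x hxD)) (hmem x hxD) (div_le_self hx0.le hq.le)
      simp only [hgdef]; linarith
    have hg'le : g' x ≤ f' x := by
      have : 0 ≤ f' (x/q) / q := div_nonneg (hder _ (hmem _ (hmemdiv x hxD))) hq0.le
      simp only [hg'def]; linarith
    have hfq : f x ≤ f (q*x) := by
      apply hmono (hmem x hxD) (hmemq x hxD)
      nlinarith
    have hnum : g x * g' x ≤ (f (q*x) - f (x/q)) * f' x := by
      calc g x * g' x ≤ g x * f' x := mul_le_mul_of_nonneg_left hg'le hgx0
        _ ≤ (f (q*x) - f (x/q)) * f' x := by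
            apply mul_le_mul_of_nonneg_right _ hf'x
            simp only [hgdef]; linarith
    simp only [hWdef]
    exact div_le_div_of_nonneg_right hnum (rpow_pos_of_pos hx0 σ).le
  -- assemble
  have hFπ : 0 ≤ g (π/2)^2/(2*(π/2)^σ) := by positivity
  have hbd : g ε^2/(2*ε^σ) ≤ ∫ x in (ε/q)..ε, W x := by
    refine le_trans ?_ claim1
    have hA : (0:ℝ) < ε ^ σ := rpow_pos_of_pos hε σ
    rw [div_le_div_iff₀ (by positivity) hA]
    nlinarith [sq_nonneg (g ε)]
  have key : σ/2 * ∫ x in ε..(π/2), g x^2/x^(1+σ)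
      ≤ (∫ x in (ε/q)..ε, W x) + ∫ x in ε..(π/2), W x := by
    have h1 : σ/2 * ∫ x in ε..(π/2), g x^2/x^(1+σ)
        = (∫ x in ε..(π/2), g x * g' x / x^σ) - (g (π/2)^2/(2*(π/2)^σ) - g ε^2/(2*ε^σ)) := by
      rw [← hFTC2, hsplit]; ring
    rw [h1]
    have := hcomp
    have := hbd
    linarith
  rw [integral_add_adjacent_intervals hWint1 hWint2] at key
  exact key

-- Step B : lower bound for the RHS lintegral in terms of G
lemma stepB (σ q : ℝ) (hσ : 0 < σ) (hq : 1 < q) (f : ℝ → ℝ)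
    (hcont : Continuous f)
    (hf : ContDiffOn ℝ 1 f (Icc 0 (q * π / 2)))
    (hder : ∀ x ∈ Icc (0:ℝ) (q * π / 2), 0 ≤ derivWithin f (Icc 0 (q * π / 2)) x) :
    ENNReal.ofReal (σ/2) * ∫⁻ x in Ioc (0:ℝ) (π/2), ENNReal.ofReal ((f x - f (x/q))^2 / x^(1+σ))
      ≤ ∫⁻ x in Ioc (0:ℝ) (π/2),
          ENNReal.ofReal ((f (q*x) - f (x/q)) * derivWithin f (Icc 0 (q * π / 2)) x / x^σ) := by
  have hq0 : (0:ℝ) < q := lt_trans one_pos hq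
  have hπ : (0:ℝ) < π / 2 := pi_div_two_pos
  set b : ℝ := q * π / 2 with hbdef
  have hπb : π / 2 < b := by rw [hbdef]; nlinarith
  have hb : 0 < b := lt_trans hπ hπb
  set f' : ℝ → ℝ := derivWithin f (Icc 0 b) with hf'def
  set g : ℝ → ℝ := fun x => f x - f (x/q) with hgdef
  set W : ℝ → ℝ := fun x => (f (q*x) - f (x/q)) * f' x / x^σ with hWdef
  have hmono : MonotoneOn f (Icc 0 b) := aux_mono hb hf hder
  have hf'c : ContinuousOn f' (Icc 0 b) := aux_cont_deriv hb hf
  have hmem : ∀ x ∈ Ioc (0:ℝ) (π/2), x ∈ Icc (0:ℝ) b :=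
    fun x hx => ⟨hx.1.le, le_trans hx.2 hπb.le⟩
  have hmemq : ∀ x ∈ Ioc (0:ℝ) (π/2), q * x ∈ Icc (0:ℝ) b := by
    intro x hx
    exact ⟨le_of_lt (mul_pos hq0 hx.1), by rw [hbdef]; nlinarith [hx.2]⟩
  have hmemdiv : ∀ x ∈ Ioc (0:ℝ) (π/2), x / q ∈ Ioc (0:ℝ) (π/2) := by
    intro x hx
    exact ⟨div_pos hx.1 hq0, le_trans (div_le_self hx.1.le hq.le) hx.2⟩
  -- measurable density for the squared integrand
  set φ : ℝ → ℝ≥0∞ := fun x => ENNReal.ofReal (g x^2 / x^(1+σ)) with hφdef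
  have hgcont : Continuous g := hcont.sub (hcont.comp (continuous_id.div_const q))
  have hφm : Measurable φ := by
    apply ENNReal.measurable_ofReal.comp
    exact ((hgcont.pow 2).measurable).div (continuous_rpow_const (by linarith)).measurable
  -- the sequence of cutoffs
  set e : ℕ → ℝ := fun n => (π/2) / (n+1) with hedef
  have he : ∀ n : ℕ, 0 < e n := fun n => div_pos hπ (by positivity)
  have hele : ∀ n : ℕ, e n ≤ π/2 := fun n => div_le_self hπ.le (le_add_of_nonneg_left (Nat.cast_nonneg n))
  -- for each n, the truncated inequality
  have hstep : ∀ n : ℕ, ENNReal.ofReal (σ/2) * ∫⁻ x in Ioc (e n) (π/2), φ x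
      ≤ ∫⁻ x in Ioc (0:ℝ) (π/2), ENNReal.ofReal (W x) := by
    intro n
    -- continuity facts on D
    have hWcont : ContinuousOn W (Icc (e n / q) (π/2)) := by
      have hsub : Icc (e n / q) (π/2) ⊆ Ioc (0:ℝ) (π/2) :=
        fun x hx => ⟨lt_of_lt_of_le (div_pos (he n) hq0) hx.1, hx.2⟩
      apply ContinuousOn.div
      · apply ContinuousOn.mul
        · apply ContinuousOn.sub
          · exact (hf.continuousOn.comp ((continuous_const.mul continuous_id).continuousOn)
              (fun x hx => hmemq x (hsub hx)))
          · exact (hf.continuousOn.comp ((continuous_id.div_const q).continuousOn)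
              (fun x hx => hmem _ (hmemdiv x (hsub hx))))
        · exact hf'c.mono (fun x hx => hmem x (hsub hx))
      · exact (continuous_rpow_const hσ.le).continuousOn
      · exact fun x hx => (rpow_pos_of_pos (lt_of_lt_of_le (div_pos (he n) hq0) hx.1) σ).ne'
    have hWint : IntegrableOn W (Ioc (e n / q) (π/2)) volume :=
      (hWcont.integrableOn_Icc).mono_set Ioc_subset_Icc_self
    have hWnn : ∀ x ∈ Ioc (e n / q) (π/2), 0 ≤ W x := by
      intro x hx
      have hxD : x ∈ Ioc (0:ℝ) (π/2) := ⟨lt_of_lt_of_le (div_pos (he n) hq0) hx.1.le, hx.2⟩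
      have h1 : f (x/q) ≤ f (q*x) := by
        apply hmono (hmem _ (hmemdiv x hxD)) (hmemq x hxD)
        have := hxD.1
        rw [div_le_iff₀ hq0]
        nlinarith [mul_le_mul_of_nonneg_left (show (1:ℝ) ≤ q*q by nlinarith) this.le]
      have h2 : 0 ≤ f' x := hder x (hmem x hxD)
      have h3 : 0 < x ^ σ := rpow_pos_of_pos hxD.1 σ
      rw [hWdef]
      exact div_nonneg (mul_nonneg (by linarith) h2) h3.le
    have hg2cont : ContinuousOn (fun x => g x^2 / x^(1+σ)) (Icc (e n) (π/2)) := by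
      apply ContinuousOn.div ((hgcont.continuousOn).pow 2)
        ((continuous_rpow_const (by linarith)).continuousOn)
      exact fun x hx => (rpow_pos_of_pos ((he n).trans_le hx.1) (1+σ)).ne'
    have hg2int : IntegrableOn (fun x => g x^2 / x^(1+σ)) (Ioc (e n) (π/2)) volume :=
      (hg2cont.integrableOn_Icc).mono_set Ioc_subset_Icc_self
    have hg2nn : ∀ x ∈ Ioc (e n) (π/2), 0 ≤ g x^2 / x^(1+σ) := by
      intro x hx
      have h3 : 0 < x ^ (1+σ) := rpow_pos_of_pos ((he n).trans hx.1) (1+σ)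
      positivity
    calc ENNReal.ofReal (σ/2) * ∫⁻ x in Ioc (e n) (π/2), φ x
        = ENNReal.ofReal (σ/2) * ENNReal.ofReal (∫ x in Ioc (e n) (π/2), g x^2 / x^(1+σ)) := by
          rw [ofReal_integral_eq_lintegral_ofReal hg2int
            (ae_restrict_of_forall_mem measurableSet_Ioc hg2nn)]
      _ = ENNReal.ofReal (σ/2 * ∫ x in Ioc (e n) (π/2), g x^2 / x^(1+σ)) := by
          rw [ENNReal.ofReal_mul (by linarith)]
      _ ≤ ENNReal.ofReal (∫ x in Ioc (e n / q) (π/2), W x) := by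
          apply ENNReal.ofReal_le_ofReal
          have := core_ineq σ q hσ hq f hf hder (he n) (hele n)
          rwa [integral_of_le (hele n), integral_of_le (le_trans (div_le_self (he n).le hq.le) (hele n))] at this
      _ = ∫⁻ x in Ioc (e n / q) (π/2), ENNReal.ofReal (W x) := by
          rw [ofReal_integral_eq_lintegral_ofReal hWint
            (ae_restrict_of_forall_mem measurableSet_Ioc hWnn)]
      _ ≤ ∫⁻ x in Ioc (0:ℝ) (π/2), ENNReal.ofReal (W x) := by
          apply lintegral_mono_set
          exact Ioc_subset_Ioc_left (div_pos (he n) hq0).le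
  -- take the supremum over n
  have hsup : ∫⁻ x in Ioc (0:ℝ) (π/2), φ x = ⨆ n : ℕ, ∫⁻ x in Ioc (e n) (π/2), φ x := by
    have h1 : ∀ (s : Set ℝ), MeasurableSet s → ∫⁻ x in s, φ x = volume.withDensity φ s :=
      fun s hs => (withDensity_apply φ hs).symm
    rw [h1 _ measurableSet_Ioc]
    have h2 : ∀ n : ℕ, ∫⁻ x in Ioc (e n) (π/2), φ x = volume.withDensity φ (Ioc (e n) (π/2)) :=
      fun n => h1 _ measurableSet_Ioc
    simp_rw [h2]
    rw [← Monotone.measure_iUnion]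
    · congr 1
      apply Subset.antisymm
      · rintro x ⟨hx1, hx2⟩
        obtain ⟨n, hn⟩ := exists_nat_one_div_lt (div_pos hx1 hπ)
        refine mem_iUnion.mpr ⟨n, ?_, hx2⟩
        calc e n = (π/2) * (1/(n+1)) := by rw [hedef]; ring
        _ < (π/2) * (x/(π/2)) := by
            apply mul_lt_mul_of_pos_left _ hπ
            exact_mod_cast hn
        _ = x := by field_simp
      · exact iUnion_subset fun n => Ioc_subset_Ioc_left (he n).le
    · intro m n hmn
      apply Ioc_subset_Ioc_left
      apply div_le_div_of_nonneg_left hπ.le (by positivity)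
      exact_mod_cast by omega
  rw [hsup, ENNReal.mul_iSup]
  exact iSup_le hstep

lemma stepC (σ q : ℝ) (hσ : 0 < σ) (hq : 1 < q) (f : ℝ → ℝ)
    (hcont : Continuous f) (hf0 : f 0 = 0) :
    ∫⁻ x in Ioc (0:ℝ) (π/2), ENNReal.ofReal (f x^2 / x^(1+σ))
      ≤ ENNReal.ofReal ((1 - q^(-(σ/2)))⁻¹) * (ENNReal.ofReal ((1 - q^(-(σ/2)))⁻¹) *
          ∫⁻ x in Ioc (0:ℝ) (π/2), ENNReal.ofReal ((f x - f (x/q))^2 / x^(1+σ))) := by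
  have hq0 : (0:ℝ) < q := lt_trans one_pos hq
  have hπ : (0:ℝ) < π / 2 := pi_div_two_pos
  set g : ℝ → ℝ := fun x => f x - f (x/q) with hgdef
  have hgcont : Continuous g := hcont.sub (hcont.comp (continuous_id.div_const q))
  set T : ℝ := q ^ (-(σ/2)) with hTdef
  set t : ℝ := q ^ (-(σ/4)) with htdef
  have hT0 : 0 < T := rpow_pos_of_pos hq0 _
  have hT1 : T < 1 := rpow_lt_one_of_one_lt_of_neg hq (by linarith)
  have ht0 : 0 < t := rpow_pos_of_pos hq0 _
  have ht2 : t^2 = T := by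
    rw [htdef, hTdef, sq, ← Real.rpow_add hq0]
    congr 1
    ring
  set c₁ : ℝ := (1 - T)⁻¹ with hc₁def
  have hc₁0 : 0 < c₁ := inv_pos.mpr (by linarith)
  set Φ : ℝ → ℝ≥0∞ := fun u => ENNReal.ofReal (g u^2 * ((u^(1+σ))⁻¹)) with hΦdef
  have hΦm : Measurable Φ := by
    apply ENNReal.measurable_ofReal.comp
    exact ((hgcont.pow 2).measurable).mul
      ((continuous_rpow_const (by linarith)).measurable.inv)
  set G : ℝ≥0∞ := ∫⁻ x in Ioc (0:ℝ) (π/2), Φ x with hGdef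
  -- pointwise Cauchy-Schwarz bound
  have hpt : ∀ x ∈ Ioc (0:ℝ) (π/2), ENNReal.ofReal (f x^2)
      ≤ ENNReal.ofReal c₁ * ∑' k : ℕ, ENNReal.ofReal (T⁻¹^k * g (x/q^k)^2) := by
    intro x hx
    set u : ℕ → ℝ := fun k => f (x / q^k) with hudef
    have hpart : ∀ n, ∑ k ∈ Finset.range n, g (x/q^k) = f x - u n := by
      intro n
      have h1 : ∀ k, g (x/q^k) = u k - u (k+1) := by
        intro k
        simp only [hgdef, hudef]
        rw [div_div, ← pow_succ]
      simp_rw [h1]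
      rw [Finset.sum_range_sub' u n]
      simp [hudef]
    have hulim : Tendsto u atTop (nhds 0) := by
      have h1 : Tendsto (fun k : ℕ => x / q^k) atTop (nhds 0) := by
        simp_rw [div_eq_mul_inv]
        have := (tendsto_inv_atTop_zero.comp (tendsto_pow_atTop_atTop_of_one_lt hq)).const_mul x
        simpa using this
      have := (hcont.tendsto 0).comp h1
      rw [hf0] at this
      exact this
    have hslim : Tendsto (fun n => (∑ k ∈ Finset.range n, g (x/q^k))^2) atTop
        (nhds (f x^2)) := by
      have h1 : Tendsto (fun n => f x - u n) atTop (nhds (f x)) := by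
        have := tendsto_const_nhds (x := f x) (f := atTop (α := ℕ)) |>.sub hulim
        rwa [sub_zero] at this
      simp_rw [hpart]
      exact h1.pow 2
    have hbound : ∀ n, ENNReal.ofReal ((∑ k ∈ Finset.range n, g (x/q^k))^2)
        ≤ ENNReal.ofReal c₁ * ∑' k : ℕ, ENNReal.ofReal (T⁻¹^k * g (x/q^k)^2) := by
      intro n
      have hCS : (∑ k ∈ Finset.range n, g (x/q^k))^2
          ≤ (∑ k ∈ Finset.range n, T^k) * (∑ k ∈ Finset.range n, T⁻¹^k * g (x/q^k)^2) := by
        have h1 : ∀ k, g (x/q^k) = t^k * (g (x/q^k) / t^k) :=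
          fun k => (mul_div_cancel₀ _ (pow_ne_zero k ht0.ne')).symm
        calc (∑ k ∈ Finset.range n, g (x/q^k))^2
            = (∑ k ∈ Finset.range n, t^k * (g (x/q^k)/t^k))^2 := by
              rw [← Finset.sum_congr rfl (fun k _ => (h1 k).symm)]
          _ ≤ (∑ k ∈ Finset.range n, (t^k)^2) * (∑ k ∈ Finset.range n, (g (x/q^k)/t^k)^2) :=
              Finset.sum_mul_sq_le_sq_mul_sq _ _ _
          _ = (∑ k ∈ Finset.range n, T^k) * (∑ k ∈ Finset.range n, T⁻¹^k * g (x/q^k)^2) := by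
              congr 1
              · exact Finset.sum_congr rfl fun k _ => by
                  rw [← pow_mul, mul_comm k 2, pow_mul, ht2]
              · exact Finset.sum_congr rfl fun k _ => by
                  rw [div_pow, ← pow_mul, mul_comm k 2, pow_mul, ht2, div_eq_mul_inv,
                    mul_comm, inv_pow]
      have hgeo : (∑ k ∈ Finset.range n, T^k) ≤ c₁ := by
        refine le_trans (Summable.sum_le_tsum _ (fun k _ => (pow_pos hT0 k).le)
          (summable_geometric_of_lt_one hT0.le hT1)) ?_
        rw [tsum_geometric_of_lt_one hT0.le hT1]
      have hsum_nn : 0 ≤ ∑ k ∈ Finset.range n, T⁻¹^k * g (x/q^k)^2 :=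
        Finset.sum_nonneg fun k _ => mul_nonneg (pow_nonneg (inv_nonneg.mpr hT0.le) k) (sq_nonneg _)
      calc ENNReal.ofReal ((∑ k ∈ Finset.range n, g (x/q^k))^2)
          ≤ ENNReal.ofReal (c₁ * ∑ k ∈ Finset.range n, T⁻¹^k * g (x/q^k)^2) := by
            apply ENNReal.ofReal_le_ofReal
            exact le_trans hCS (mul_le_mul_of_nonneg_right hgeo hsum_nn)
        _ = ENNReal.ofReal c₁ * ENNReal.ofReal (∑ k ∈ Finset.range n, T⁻¹^k * g (x/q^k)^2) :=
            ENNReal.ofReal_mul hc₁0.le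
        _ = ENNReal.ofReal c₁ * ∑ k ∈ Finset.range n, ENNReal.ofReal (T⁻¹^k * g (x/q^k)^2) := by
            rw [ENNReal.ofReal_sum_of_nonneg
              (fun k _ => mul_nonneg (pow_nonneg (inv_nonneg.mpr hT0.le) k) (sq_nonneg _))]
        _ ≤ ENNReal.ofReal c₁ * ∑' k : ℕ, ENNReal.ofReal (T⁻¹^k * g (x/q^k)^2) :=
            mul_le_mul_right (ENNReal.sum_le_tsum _) _
    exact le_of_tendsto ((ENNReal.continuous_ofReal.tendsto _).comp hslim)
      (Eventually.of_forall hbound)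
  -- the per-k scaled integral bound
  have hperk : ∀ k : ℕ, ∫⁻ x in Ioc (0:ℝ) (π/2),
        ENNReal.ofReal (T⁻¹^k * g (x/q^k)^2) * ENNReal.ofReal ((x^(1+σ))⁻¹)
      ≤ ENNReal.ofReal (T^k) * G := by
    intro k
    have hqk0 : (0:ℝ) < q^k := pow_pos hq0 k
    have hconst : T⁻¹^k * (((q:ℝ)^k)^(1+σ))⁻¹ * (q:ℝ)^k = T^k := by
      have e1 : ((q:ℝ)^k : ℝ) = q ^ ((k:ℕ):ℝ) := (Real.rpow_natCast q k).symm
      have e2 : T⁻¹ = q ^ (σ/2) := by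
        rw [hTdef, ← Real.rpow_neg hq0.le]
        norm_num
      rw [e2, ← Real.rpow_natCast (q ^ (σ/2)) k, ← Real.rpow_mul hq0.le, e1,
        ← Real.rpow_mul hq0.le, ← Real.rpow_neg hq0.le, ← Real.rpow_add hq0,
        ← Real.rpow_add hq0, hTdef, ← Real.rpow_natCast (q ^ (-(σ/2))) k,
        ← Real.rpow_mul hq0.le]
      congr 1
      ring
    have hsplit : ∀ x ∈ Ioc (0:ℝ) (π/2),
        ENNReal.ofReal (T⁻¹^k * g (x/q^k)^2) * ENNReal.ofReal ((x^(1+σ))⁻¹)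
        = ENNReal.ofReal (T⁻¹^k * (((q:ℝ)^k)^(1+σ))⁻¹) * Φ (x/(q^k)) := by
      intro x hx
      have hx0 : 0 < x := hx.1
      have hxq : x = q^k * (x/q^k) := (mul_div_cancel₀ _ hqk0.ne').symm
      have hrw : (x:ℝ)^(1+σ) = ((q:ℝ)^k)^(1+σ) * (x/q^k)^(1+σ) := by
        conv_lhs => rw [hxq]
        exact Real.mul_rpow hqk0.le (by positivity)
      rw [hΦdef]
      simp only
      rw [hrw, mul_inv, ENNReal.ofReal_mul (by positivity),
        ENNReal.ofReal_mul (by positivity), ENNReal.ofReal_mul (by positivity),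
        ENNReal.ofReal_mul (by positivity)]
      ring
    rw [setLIntegral_congr_fun_ae measurableSet_Ioc (ae_of_all _ hsplit),
      lintegral_const_mul' _ _ ENNReal.ofReal_ne_top,
      aux_scale hΦm hqk0 (π/2)]
    have hmono : ∫⁻ u in Ioc (0:ℝ) (π/2 / q^k), Φ u ≤ G := by
      rw [hGdef]
      apply lintegral_mono_set
      exact Ioc_subset_Ioc_right (div_le_self hπ.le (one_le_pow₀ hq.le))
    calc ENNReal.ofReal (T⁻¹^k * (((q:ℝ)^k)^(1+σ))⁻¹) *
          (ENNReal.ofReal (q^k) * ∫⁻ u in Ioc (0:ℝ) (π/2 / q^k), Φ u)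
        ≤ ENNReal.ofReal (T⁻¹^k * (((q:ℝ)^k)^(1+σ))⁻¹) * (ENNReal.ofReal (q^k) * G) :=
          mul_le_mul_right (mul_le_mul_right hmono _) _
      _ = ENNReal.ofReal (T^k) * G := by
          rw [← mul_assoc, ← ENNReal.ofReal_mul (by positivity), hconst]
  -- main chain
  calc ∫⁻ x in Ioc (0:ℝ) (π/2), ENNReal.ofReal (f x^2 / x^(1+σ))
      = ∫⁻ x in Ioc (0:ℝ) (π/2), ENNReal.ofReal (f x^2) * ENNReal.ofReal ((x^(1+σ))⁻¹) := by
        apply lintegral_congr fun x => ?_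
        rw [div_eq_mul_inv, ENNReal.ofReal_mul (sq_nonneg _)]
    _ ≤ ∫⁻ x in Ioc (0:ℝ) (π/2),
          (ENNReal.ofReal c₁ * ∑' k : ℕ, ENNReal.ofReal (T⁻¹^k * g (x/q^k)^2))
            * ENNReal.ofReal ((x^(1+σ))⁻¹) := by
        apply setLIntegral_mono' measurableSet_Ioc
        intro x hx
        exact mul_le_mul_left (hpt x hx) _
    _ = ENNReal.ofReal c₁ * ∫⁻ x in Ioc (0:ℝ) (π/2),
          ∑' k : ℕ, ENNReal.ofReal (T⁻¹^k * g (x/q^k)^2) * ENNReal.ofReal ((x^(1+σ))⁻¹) := by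
        rw [← lintegral_const_mul' _ _ ENNReal.ofReal_ne_top]
        apply lintegral_congr fun x => ?_
        rw [mul_assoc, ENNReal.tsum_mul_right]
    _ = ENNReal.ofReal c₁ * ∑' k : ℕ, ∫⁻ x in Ioc (0:ℝ) (π/2),
          ENNReal.ofReal (T⁻¹^k * g (x/q^k)^2) * ENNReal.ofReal ((x^(1+σ))⁻¹) := by
        congr 1
        apply lintegral_tsum
        intro k
        apply AEMeasurable.mul (f := fun a => ENNReal.ofReal (T⁻¹ ^ k * g (a / q ^ k) ^ 2)) (g := fun a => ENNReal.ofReal (a ^ (1 + σ))⁻¹)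
        · apply (ENNReal.measurable_ofReal.comp ?_).aemeasurable
          exact (continuous_const.mul ((hgcont.comp (continuous_id.div_const _)).pow 2)).measurable
        · exact (ENNReal.measurable_ofReal.comp
            ((continuous_rpow_const (by linarith)).measurable.inv)).aemeasurable
    _ ≤ ENNReal.ofReal c₁ * ∑' k : ℕ, ENNReal.ofReal (T^k) * G := by
        exact mul_le_mul_right (ENNReal.tsum_le_tsum hperk) _
    _ = ENNReal.ofReal c₁ * ((1 - ENNReal.ofReal T)⁻¹ * G) := by
        congr 1
        rw [ENNReal.tsum_mul_right]
        congr 1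
        simp_rw [ENNReal.ofReal_pow hT0.le]
        exact ENNReal.tsum_geometric _
    _ = ENNReal.ofReal c₁ * (ENNReal.ofReal c₁ * G) := by
        congr 2
        rw [hc₁def, ENNReal.ofReal_inv_of_pos (by linarith : (0:ℝ) < 1 - T),
          ENNReal.ofReal_sub 1 hT0.le, ENNReal.ofReal_one]
    _ = ENNReal.ofReal ((1 - q^(-(σ/2)))⁻¹) * (ENNReal.ofReal ((1 - q^(-(σ/2)))⁻¹) *
          ∫⁻ x in Ioc (0:ℝ) (π/2), ENNReal.ofReal ((f x - f (x/q))^2 / x^(1+σ))) := by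
        have hfun : ∀ x : ℝ, ENNReal.ofReal ((f x - f (x/q))^2 / x^(1+σ)) = Φ x := by
          intro x
          rw [hΦdef]
          simp only [hgdef]
          rw [div_eq_mul_inv]
        simp_rw [hfun]
        rfl


theorem key_integral_inequality (σ q : ℝ) (hσ : 0 < σ) (hq : q ∈ Set.Ioo 1 2) :
    ∃ C > (0:ℝ), ∀ f : ℝ → ℝ,
      ContDiffOn ℝ 1 f (Set.Icc 0 (q * π / 2)) →
      (∀ x ∈ Set.Icc 0 (q * π / 2), 0 ≤ f x) →
      f 0 = 0 →
      (∀ x ∈ Set.Icc 0 (q * π / 2), 0 ≤ derivWithin f (Set.Icc 0 (q * π / 2)) x) →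
      ENNReal.ofReal C * ∫⁻ x in Set.Ioc (0:ℝ) (π / 2),
          ENNReal.ofReal (f x ^ 2 / x ^ (1 + σ)) ≤
        ∫⁻ x in Set.Ioc (0:ℝ) (π / 2),
          ENNReal.ofReal ((f (q * x) - f (x / q)) *
            derivWithin f (Set.Icc 0 (q * π / 2)) x / x ^ σ) := by
  obtain ⟨hq1, hq2⟩ := hq
  have hq0 : (0:ℝ) < q := lt_trans one_pos hq1
  have hπ : (0:ℝ) < π / 2 := pi_div_two_pos
  have hπb : π / 2 < q * π / 2 := by nlinarith
  have hb : (0:ℝ) < q * π / 2 := lt_trans hπ hπb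
  set T : ℝ := q ^ (-(σ/2)) with hTdef
  have hT1 : T < 1 := rpow_lt_one_of_one_lt_of_neg hq1 (by linarith)
  have hT0 : 0 < T := rpow_pos_of_pos hq0 _
  have h1T : (0:ℝ) < 1 - T := by linarith
  refine ⟨σ/2 * (1 - T)^2, by positivity, ?_⟩
  intro f hf hnn hf0 hder
  -- replace f by a globally continuous clamp
  set cl : ℝ → ℝ := fun x => max 0 (min x (q * π / 2)) with hcldef
  have hclcont : Continuous cl := continuous_const.max (continuous_id.min continuous_const)
  have hclmem : ∀ x, cl x ∈ Icc (0:ℝ) (q * π / 2) :=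
    fun x => ⟨le_max_left _ _, max_le hb.le (min_le_right x _)⟩
  set f₁ : ℝ → ℝ := fun x => f (cl x) with hf₁def
  have hEq : EqOn f₁ f (Icc (0:ℝ) (q * π / 2)) := by
    intro x hx
    simp only [hf₁def, hcldef]
    rw [min_eq_left hx.2, max_eq_right hx.1]
  have hf₁cont : Continuous f₁ := hf.continuousOn.comp_continuous hclcont hclmem
  have hf₁ : ContDiffOn ℝ 1 f₁ (Icc 0 (q * π / 2)) := hf.congr hEq
  have hf₁0 : f₁ 0 = 0 := by
    simp only [hf₁def, hcldef]
    rw [min_eq_left hb.le, max_self]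
    exact hf0
  have hderiv_eq : ∀ x ∈ Icc (0:ℝ) (q * π / 2),
      derivWithin f₁ (Icc 0 (q * π / 2)) x = derivWithin f (Icc 0 (q * π / 2)) x :=
    fun x hx => derivWithin_congr hEq (hEq hx)
  have hder₁ : ∀ x ∈ Icc (0:ℝ) (q * π / 2), 0 ≤ derivWithin f₁ (Icc 0 (q * π / 2)) x :=
    fun x hx => (hderiv_eq x hx) ▸ hder x hx
  -- membership facts
  have hmem : ∀ x ∈ Ioc (0:ℝ) (π/2), x ∈ Icc (0:ℝ) (q * π / 2) :=
    fun x hx => ⟨hx.1.le, le_trans hx.2 hπb.le⟩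
  have hmemq : ∀ x ∈ Ioc (0:ℝ) (π/2), q * x ∈ Icc (0:ℝ) (q * π / 2) := by
    intro x hx
    exact ⟨le_of_lt (mul_pos hq0 hx.1), by nlinarith [hx.2]⟩
  have hmemdiv : ∀ x ∈ Ioc (0:ℝ) (π/2), x / q ∈ Icc (0:ℝ) (q * π / 2) := by
    intro x hx
    exact hmem _ ⟨div_pos hx.1 hq0, le_trans (div_le_self hx.1.le hq1.le) hx.2⟩
  -- rewrite the two lintegrals in terms of f₁
  have hA : ∫⁻ x in Ioc (0:ℝ) (π/2), ENNReal.ofReal (f x ^ 2 / x ^ (1 + σ))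
      = ∫⁻ x in Ioc (0:ℝ) (π/2), ENNReal.ofReal (f₁ x ^ 2 / x ^ (1 + σ)) := by
    apply setLIntegral_congr_fun_ae measurableSet_Ioc
    apply ae_of_all
    intro x hx
    rw [hEq (hmem x hx)]
  have hB : ∫⁻ x in Ioc (0:ℝ) (π/2),
        ENNReal.ofReal ((f (q * x) - f (x / q)) * derivWithin f (Icc 0 (q * π / 2)) x / x ^ σ)
      = ∫⁻ x in Ioc (0:ℝ) (π/2),
        ENNReal.ofReal ((f₁ (q * x) - f₁ (x / q)) * derivWithin f₁ (Icc 0 (q * π / 2)) x / x ^ σ) := by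
    apply setLIntegral_congr_fun_ae measurableSet_Ioc
    apply ae_of_all
    intro x hx
    rw [hEq (hmemq x hx), hEq (hmemdiv x hx), hderiv_eq x (hmem x hx)]
  rw [hA, hB]
  -- combine step C and step B
  have hC := stepC σ q hσ hq1 f₁ hf₁cont hf₁0
  have hBnd := stepB σ q hσ hq1 f₁ hf₁cont hf₁ hder₁
  calc ENNReal.ofReal (σ/2 * (1 - T)^2) * ∫⁻ x in Ioc (0:ℝ) (π/2),
        ENNReal.ofReal (f₁ x ^ 2 / x ^ (1 + σ))
      ≤ ENNReal.ofReal (σ/2 * (1 - T)^2) * (ENNReal.ofReal ((1 - T)⁻¹) *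
          (ENNReal.ofReal ((1 - T)⁻¹) *
            ∫⁻ x in Ioc (0:ℝ) (π/2), ENNReal.ofReal ((f₁ x - f₁ (x/q))^2 / x^(1+σ)))) :=
        mul_le_mul_right hC _
    _ = ENNReal.ofReal (σ/2) *
          ∫⁻ x in Ioc (0:ℝ) (π/2), ENNReal.ofReal ((f₁ x - f₁ (x/q))^2 / x^(1+σ)) := by
        rw [← mul_assoc, ← mul_assoc, ← ENNReal.ofReal_mul (by positivity),
          ← ENNReal.ofReal_mul (by positivity)]
        congr 2
        field_simp
    _ ≤ ∫⁻ x in Ioc (0:ℝ) (π/2),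
          ENNReal.ofReal ((f₁ (q * x) - f₁ (x / q)) * derivWithin f₁ (Icc 0 (q * π / 2)) x / x ^ σ) :=
        hBnd
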